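/- Let P, Q be Borel probability measures on ℝ with finite second moments, with cumulative distribution functions F and G and generalized inverses F⁻, G⁻. Let μ⁻ be the pushforward of Lebesgue measure on (0,1) under the map u ↦ (F⁻(u), G⁻(1−u)) (the antitone coupling). Then μ⁻ ∈ M(P,Q) and ∬ xy dμ⁻(x,y) = inf_{μ ∈ M(P,Q)} ∬ xy dμ(x,y). -/

import Mathlib

section Stmt16AuxSec
open MeasureTheory Set Filter ProbabilityTheory
open scoped Topology ENNReal
set_option linter.unusedSectionVars false

noncomputable section
namespace Stmt16Aux


/-- elementary "layer" function: `∫ s, e a s = a`. -/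
def e (a s : ℝ) : ℝ := (if s < a then 1 else 0) - (if s < 0 then 1 else 0)

lemma e_eq_indicator (a s : ℝ) :
    e a s = (Ico (0:ℝ) a).indicator (fun _ => (1:ℝ)) s
      - (Ico a (0:ℝ)).indicator (fun _ => (1:ℝ)) s := by
  simp only [e, indicator, mem_Ico]
  split_ifs <;> simp_all <;> linarith

lemma abs_e (a s : ℝ) :
    |e a s| = (Ico (0:ℝ) a).indicator (fun _ => (1:ℝ)) s
      + (Ico a (0:ℝ)).indicator (fun _ => (1:ℝ)) s := by
  simp only [e, indicator, mem_Ico]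
  split_ifs <;> simp_all <;> linarith

lemma integrable_ind (a b : ℝ) :
    Integrable ((Ico a b).indicator (fun _ => (1:ℝ))) volume := by
  rw [integrable_indicator_iff measurableSet_Ico]
  exact integrableOn_const measure_Ico_lt_top.ne

lemma integral_ind (a b : ℝ) :
    ∫ s, (Ico a b).indicator (fun _ => (1:ℝ)) s = max (b - a) 0 := by
  rw [integral_indicator measurableSet_Ico, setIntegral_const, measureReal_def, Real.volume_Ico]
  simp only [smul_eq_mul, mul_one]
  rcases le_total (b - a) 0 with h | h
  · rw [ENNReal.ofReal_of_nonpos h, max_eq_right h]; simp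
  · rw [ENNReal.toReal_ofReal h, max_eq_left h]

lemma integrable_e (a : ℝ) : Integrable (e a) volume := by
  have : e a = fun s => (Ico (0:ℝ) a).indicator (fun _ => (1:ℝ)) s
      - (Ico a (0:ℝ)).indicator (fun _ => (1:ℝ)) s := funext fun s => e_eq_indicator a s
  rw [this]
  exact (integrable_ind 0 a).sub (integrable_ind a 0)

lemma integral_e (a : ℝ) : ∫ s, e a s = a := by
  have : (fun s => e a s) = fun s => (Ico (0:ℝ) a).indicator (fun _ => (1:ℝ)) s
      - (Ico a (0:ℝ)).indicator (fun _ => (1:ℝ)) s := funext fun s => e_eq_indicator a s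
  rw [this, integral_sub (integrable_ind 0 a) (integrable_ind a 0),
    integral_ind, integral_ind]
  rcases le_total 0 a with h | h
  · rw [max_eq_left (by linarith), max_eq_right (by linarith)]; ring
  · rw [max_eq_right (by linarith), max_eq_left (by linarith)]; ring

lemma integrable_abs_e (a : ℝ) : Integrable (fun s => |e a s|) volume :=
  (integrable_e a).abs

lemma integral_abs_e (a : ℝ) : ∫ s, |e a s| = |a| := by
  have : (fun s => |e a s|) = fun s => (Ico (0:ℝ) a).indicator (fun _ => (1:ℝ)) s
      + (Ico a (0:ℝ)).indicator (fun _ => (1:ℝ)) s := funext fun s => abs_e a s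
  rw [this, integral_add (integrable_ind 0 a) (integrable_ind a 0), integral_ind, integral_ind]
  rcases le_total 0 a with h | h
  · rw [max_eq_left (by linarith), max_eq_right (by linarith), abs_of_nonneg h]; ring
  · rw [max_eq_right (by linarith), max_eq_left (by linarith), abs_of_nonpos h]; ring

lemma measurable_e : Measurable (fun q : ℝ × ℝ => e q.1 q.2) := by
  unfold e
  exact ((measurable_const.ite (measurableSet_lt measurable_snd measurable_fst)
    measurable_const).sub (measurable_const.ite
      (measurableSet_lt measurable_snd measurable_const) measurable_const))



variable (P : Measure ℝ) [IsProbabilityMeasure P]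

/-- quantile function -/
def qf (P : Measure ℝ) (u : ℝ) : ℝ := sInf {x : ℝ | u ≤ cdf P x}

lemma qf_nonempty {u : ℝ} (hu : u < 1) : {x : ℝ | u ≤ cdf P x}.Nonempty := by
  obtain ⟨x, hx⟩ := ((tendsto_cdf_atTop P).eventually (eventually_gt_nhds hu)).exists
  exact ⟨x, hx.le⟩

lemma qf_bddBelow {u : ℝ} (hu : 0 < u) : BddBelow {x : ℝ | u ≤ cdf P x} := by
  obtain ⟨z, hz⟩ := eventually_atBot.1 ((tendsto_cdf_atBot P).eventually (eventually_lt_nhds hu))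
  refine ⟨z, fun y hy => ?_⟩
  by_contra h
  exact absurd hy (not_le.2 (hz y (le_of_not_ge h)))

lemma qf_le_iff {u x : ℝ} (hu : u ∈ Ioo (0:ℝ) 1) : qf P u ≤ x ↔ u ≤ cdf P x := by
  constructor
  · intro h
    have key : u ≤ cdf P (qf P u) := by
      have htd : Tendsto (cdf P) (𝓝[>] (qf P u)) (𝓝 (cdf P (qf P u))) :=
        ((cdf P).right_continuous _).tendsto.mono_left (nhdsWithin_mono _ Ioi_subset_Ici_self)
      refine ge_of_tendsto htd ?_
      filter_upwards [self_mem_nhdsWithin] with y hy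
      obtain ⟨s, hsS, hs⟩ := (csInf_lt_iff (qf_bddBelow P hu.1) (qf_nonempty P hu.2)).1 hy
      exact le_trans hsS ((cdf P).mono hs.le)
    exact key.trans ((cdf P).mono h)
  · intro h
    exact csInf_le (qf_bddBelow P hu.1) h

lemma lt_qf_iff {u x : ℝ} (hu : u ∈ Ioo (0:ℝ) 1) : x < qf P u ↔ cdf P x < u := by
  rw [← not_le, ← not_le, not_iff_not]
  exact qf_le_iff P hu

lemma monotoneOn_qf : MonotoneOn (qf P) (Ioo (0:ℝ) 1) := fun u hu v hv huv =>
  csInf_le_csInf (qf_bddBelow P hu.1) (qf_nonempty P hv.2)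
    (fun x hx => le_trans huv hx)

lemma aemeasurable_qf : AEMeasurable (qf P) (volume.restrict (Ioo (0:ℝ) 1)) :=
  aemeasurable_restrict_of_monotoneOn measurableSet_Ioo (monotoneOn_qf P)

lemma aemeasurable_qf_anti :
    AEMeasurable (fun u => qf P (1 - u)) (volume.restrict (Ioo (0:ℝ) 1)) := by
  refine aemeasurable_restrict_of_antitoneOn measurableSet_Ioo ?_
  intro u hu v hv huv
  exact monotoneOn_qf P ⟨by linarith [hv.2], by linarith [hv.1]⟩
    ⟨by linarith [hu.2], by linarith [hu.1]⟩ (by linarith)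

lemma vol_Iic_inter {c : ℝ} (h0 : 0 ≤ c) (h1 : c ≤ 1) :
    volume (Iic c ∩ Ioo (0:ℝ) 1) = ENNReal.ofReal c := by
  have h2 : Iic c ∩ Ioo (0:ℝ) 1 ⊆ Ioc 0 c := fun u hu => ⟨hu.2.1, hu.1⟩
  have h3 : Ioo (0:ℝ) c ⊆ Iic c ∩ Ioo 0 1 := fun u hu => ⟨hu.2.le, hu.1, lt_of_lt_of_le hu.2 h1⟩
  refine le_antisymm ((measure_mono h2).trans_eq ?_) (le_trans (le_of_eq ?_) (measure_mono h3))
  · rw [Real.volume_Ioc, sub_zero]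
  · rw [Real.volume_Ioo, sub_zero]

lemma vol_Ici_inter {c : ℝ} (h0 : 0 ≤ c) (h1 : c ≤ 1) :
    volume (Ici c ∩ Ioo (0:ℝ) 1) = ENNReal.ofReal (1 - c) := by
  refine le_antisymm ?_ ?_
  · refine le_trans (measure_mono (fun u hu => ?_)) (le_of_eq (Real.volume_Ico (a := c) (b := 1)))
    exact ⟨hu.1, hu.2.2⟩
  · refine le_trans (le_of_eq (Real.volume_Ioo (a := c) (b := 1)).symm)
      (measure_mono (fun u hu => ⟨hu.1.le, lt_of_le_of_lt h0 hu.1, hu.2⟩))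

lemma map_qf : (volume.restrict (Ioo (0:ℝ) 1)).map (qf P) = P := by
  have hfin : IsFiniteMeasure ((volume.restrict (Ioo (0:ℝ) 1)).map (qf P)) := by
    constructor
    rw [Measure.map_apply_of_aemeasurable (aemeasurable_qf P) MeasurableSet.univ]
    simp [Real.volume_Ioo]
  refine Measure.ext_of_Iic _ _ fun x => ?_
  rw [Measure.map_apply_of_aemeasurable (aemeasurable_qf P) measurableSet_Iic,
      Measure.restrict_apply' measurableSet_Ioo]
  have hset : qf P ⁻¹' Iic x ∩ Ioo (0:ℝ) 1 = Iic (cdf P x) ∩ Ioo (0:ℝ) 1 := by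
    ext u
    simp only [mem_inter_iff, mem_preimage, mem_Iic, and_congr_left_iff]
    intro hu
    exact qf_le_iff P hu
  rw [hset, vol_Iic_inter (cdf_nonneg P x) (cdf_le_one P x), ofReal_cdf]

lemma map_qf_anti : (volume.restrict (Ioo (0:ℝ) 1)).map (fun u => qf P (1 - u)) = P := by
  have hfin : IsFiniteMeasure ((volume.restrict (Ioo (0:ℝ) 1)).map (fun u => qf P (1 - u))) := by
    constructor
    rw [Measure.map_apply_of_aemeasurable (aemeasurable_qf_anti P) MeasurableSet.univ]
    simp [Real.volume_Ioo]
  refine Measure.ext_of_Iic _ _ fun x => ?_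
  rw [Measure.map_apply_of_aemeasurable (aemeasurable_qf_anti P) measurableSet_Iic,
      Measure.restrict_apply' measurableSet_Ioo]
  have hset : (fun u => qf P (1 - u)) ⁻¹' Iic x ∩ Ioo (0:ℝ) 1
      = Ici (1 - cdf P x) ∩ Ioo (0:ℝ) 1 := by
    ext u
    simp only [mem_inter_iff, mem_preimage, mem_Iic, mem_Ici, and_congr_left_iff]
    intro hu
    rw [qf_le_iff P ⟨by linarith [hu.2], by linarith [hu.1]⟩]
    constructor <;> intro h <;> linarith
  rw [hset, vol_Ici_inter (by linarith [cdf_le_one P x]) (by linarith [cdf_nonneg P x]),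
    show (1 - (1 - (cdf P x)) : ℝ) = cdf P x by ring, ofReal_cdf]

section CouplingSec

variable {P Q : Measure ℝ} [IsProbabilityMeasure P] [IsProbabilityMeasure Q]
  {μ : Measure (ℝ × ℝ)} [IsProbabilityMeasure μ]

lemma fst_preimage (s : ℝ) : Prod.fst ⁻¹' (Ioi s) = (Ioi s ×ˢ (univ : Set ℝ)) := by
  ext p; simp [Set.mem_prod]

lemma snd_preimage (t : ℝ) : Prod.snd ⁻¹' (Ioi t) = ((univ : Set ℝ) ×ˢ Ioi t) := by
  ext p; simp [Set.mem_prod]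

lemma coupling_fst_sq (h1 : μ.map Prod.fst = P) (hP : Integrable (fun x : ℝ => x ^ 2) P) :
    Integrable (fun p : ℝ × ℝ => p.1 ^ 2) μ := by
  rw [← h1] at hP
  exact (integrable_map_measure (measurable_id.pow_const 2).aestronglyMeasurable
    measurable_fst.aemeasurable).1 hP

lemma coupling_snd_sq (h2 : μ.map Prod.snd = Q) (hQ : Integrable (fun y : ℝ => y ^ 2) Q) :
    Integrable (fun p : ℝ × ℝ => p.2 ^ 2) μ := by
  rw [← h2] at hQ
  exact (integrable_map_measure (measurable_id.pow_const 2).aestronglyMeasurable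
    measurable_snd.aemeasurable).1 hQ

lemma coupling_absmul (h1 : μ.map Prod.fst = P) (h2 : μ.map Prod.snd = Q)
    (hP : Integrable (fun x : ℝ => x ^ 2) P) (hQ : Integrable (fun y : ℝ => y ^ 2) Q) :
    Integrable (fun p : ℝ × ℝ => |p.1| * |p.2|) μ := by
  refine Integrable.mono' (g := fun p => (p.1 ^ 2 + p.2 ^ 2) / 2)
    (((coupling_fst_sq h1 hP).add (coupling_snd_sq h2 hQ)).div_const 2)
    ((measurable_fst.abs.mul measurable_snd.abs).aestronglyMeasurable) ?_
  refine ae_of_all _ fun p => ?_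
  rw [Real.norm_eq_abs, abs_mul, abs_abs, abs_abs]
  nlinarith [sq_nonneg (|p.1| - |p.2|), sq_abs p.1, sq_abs p.2]

lemma measurable_Phi :
    Measurable (fun z : (ℝ × ℝ) × (ℝ × ℝ) => e z.1.1 z.2.1 * e z.1.2 z.2.2) := by
  exact (measurable_e.comp ((measurable_fst.fst).prodMk (measurable_snd.fst))).mul
    (measurable_e.comp ((measurable_fst.snd).prodMk (measurable_snd.snd)))

lemma integrable_Phi (h1 : μ.map Prod.fst = P) (h2 : μ.map Prod.snd = Q)
    (hP : Integrable (fun x : ℝ => x ^ 2) P) (hQ : Integrable (fun y : ℝ => y ^ 2) Q) :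
    Integrable (fun z : (ℝ × ℝ) × (ℝ × ℝ) => e z.1.1 z.2.1 * e z.1.2 z.2.2)
      (μ.prod volume) := by
  refine (integrable_prod_iff measurable_Phi.aestronglyMeasurable).2 ⟨ae_of_all _ fun p => ?_, ?_⟩
  · rw [Measure.volume_eq_prod]
    exact (integrable_e p.1).mul_prod (integrable_e p.2)
  · have heq : (fun p : ℝ × ℝ => ∫ q : ℝ × ℝ, ‖e p.1 q.1 * e p.2 q.2‖)
        = fun p : ℝ × ℝ => |p.1| * |p.2| := by
      funext p
      rw [Measure.volume_eq_prod]
      have : (fun q : ℝ × ℝ => ‖e p.1 q.1 * e p.2 q.2‖)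
          = fun q : ℝ × ℝ => |e p.1 q.1| * |e p.2 q.2| := by
        funext q; rw [Real.norm_eq_abs, abs_mul]
      rw [this, integral_prod_mul (fun s => |e p.1 s|) (fun t => |e p.2 t|),
        integral_abs_e, integral_abs_e]
    rw [heq]
    exact coupling_absmul h1 h2 hP hQ

lemma ind_prod_eq (s t : ℝ) (p : ℝ × ℝ) :
    (Ioi s ×ˢ Ioi t).indicator (fun _ => (1:ℝ)) p
      = (if s < p.1 then (1:ℝ) else 0) * (if t < p.2 then (1:ℝ) else 0) := by
  simp only [indicator, Set.mem_prod, mem_Ioi]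
  split_ifs <;> simp_all

lemma ind_fst_eq (s : ℝ) (p : ℝ × ℝ) :
    (Ioi s ×ˢ (univ : Set ℝ)).indicator (fun _ => (1:ℝ)) p
      = (if s < p.1 then (1:ℝ) else 0) := by
  simp only [indicator, Set.mem_prod, mem_Ioi, mem_univ, and_true]

lemma ind_snd_eq (t : ℝ) (p : ℝ × ℝ) :
    ((univ : Set ℝ) ×ˢ Ioi t).indicator (fun _ => (1:ℝ)) p
      = (if t < p.2 then (1:ℝ) else 0) := by
  simp only [indicator, Set.mem_prod, mem_Ioi, mem_univ, true_and]

lemma inner_integral_eq (h1 : μ.map Prod.fst = P) (h2 : μ.map Prod.snd = Q) (s t : ℝ) :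
    ∫ p : ℝ × ℝ, e p.1 s * e p.2 t ∂μ =
      (μ (Ioi s ×ˢ Ioi t)).toReal
        - (if t < 0 then (1:ℝ) else 0) * (P (Ioi s)).toReal
        - (if s < 0 then (1:ℝ) else 0) * (Q (Ioi t)).toReal
        + (if s < 0 then (1:ℝ) else 0) * (if t < 0 then (1:ℝ) else 0) := by
  set cs : ℝ := if s < 0 then (1:ℝ) else 0 with hcs
  set ct : ℝ := if t < 0 then (1:ℝ) else 0 with hct
  have hI1 : Integrable ((Ioi s ×ˢ Ioi t).indicator (fun _ => (1:ℝ))) μ :=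
    (integrable_const (1:ℝ)).indicator (measurableSet_Ioi.prod measurableSet_Ioi)
  have hI2 : Integrable ((Ioi s ×ˢ (univ : Set ℝ)).indicator (fun _ => (1:ℝ))) μ :=
    (integrable_const (1:ℝ)).indicator (measurableSet_Ioi.prod MeasurableSet.univ)
  have hI3 : Integrable (((univ : Set ℝ) ×ˢ Ioi t).indicator (fun _ => (1:ℝ))) μ :=
    (integrable_const (1:ℝ)).indicator (MeasurableSet.univ.prod measurableSet_Ioi)
  have hpt : (fun p : ℝ × ℝ => e p.1 s * e p.2 t)
      = fun p => (Ioi s ×ˢ Ioi t).indicator (fun _ => (1:ℝ)) p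
          - ct * (Ioi s ×ˢ (univ : Set ℝ)).indicator (fun _ => (1:ℝ)) p
          - cs * ((univ : Set ℝ) ×ˢ Ioi t).indicator (fun _ => (1:ℝ)) p
          + cs * ct := by
    funext p
    rw [ind_prod_eq, ind_fst_eq, ind_snd_eq, hcs, hct]
    simp only [e]
    ring
  have hA : Integrable (fun p : ℝ × ℝ =>
      (Ioi s ×ˢ Ioi t).indicator (fun _ => (1:ℝ)) p
        - ct * (Ioi s ×ˢ (univ : Set ℝ)).indicator (fun _ => (1:ℝ)) p
        - cs * ((univ : Set ℝ) ×ˢ Ioi t).indicator (fun _ => (1:ℝ)) p) μ := by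
    exact (hI1.sub (hI2.const_mul ct)).sub (hI3.const_mul cs)
  have hB : Integrable (fun p : ℝ × ℝ =>
      (Ioi s ×ˢ Ioi t).indicator (fun _ => (1:ℝ)) p
        - ct * (Ioi s ×ˢ (univ : Set ℝ)).indicator (fun _ => (1:ℝ)) p) μ := by
    exact hI1.sub (hI2.const_mul ct)
  rw [hpt, integral_add hA (integrable_const _), integral_sub hB (hI3.const_mul cs),
    integral_sub hI1 (hI2.const_mul ct), integral_const_mul, integral_const_mul,
    integral_const]
  have e1 : ∫ p : ℝ × ℝ, (Ioi s ×ˢ Ioi t).indicator (fun _ => (1:ℝ)) p ∂μ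
      = (μ (Ioi s ×ˢ Ioi t)).toReal := by
    rw [integral_indicator_const (1:ℝ) (measurableSet_Ioi.prod measurableSet_Ioi)]
    simp [measureReal_def]
  have e2 : ∫ p : ℝ × ℝ, (Ioi s ×ˢ (univ : Set ℝ)).indicator (fun _ => (1:ℝ)) p ∂μ
      = (P (Ioi s)).toReal := by
    rw [integral_indicator_const (1:ℝ) (measurableSet_Ioi.prod MeasurableSet.univ)]
    rw [← h1, Measure.map_apply measurable_fst measurableSet_Ioi, fst_preimage]
    simp [measureReal_def]
  have e3 : ∫ p : ℝ × ℝ, ((univ : Set ℝ) ×ˢ Ioi t).indicator (fun _ => (1:ℝ)) p ∂μ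
      = (Q (Ioi t)).toReal := by
    rw [integral_indicator_const (1:ℝ) (MeasurableSet.univ.prod measurableSet_Ioi)]
    rw [← h2, Measure.map_apply measurable_snd measurableSet_Ioi, snd_preimage]
    simp [measureReal_def]
  rw [e1, e2, e3]
  simp [measure_univ]

lemma key_repr (h1 : μ.map Prod.fst = P) (h2 : μ.map Prod.snd = Q)
    (hP : Integrable (fun x : ℝ => x ^ 2) P) (hQ : Integrable (fun y : ℝ => y ^ 2) Q) :
    ∫ p : ℝ × ℝ, p.1 * p.2 ∂μ
      = ∫ q : ℝ × ℝ, (∫ p : ℝ × ℝ, e p.1 q.1 * e p.2 q.2 ∂μ) := by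
  have hswap := integral_integral_swap (f := fun (p q : ℝ × ℝ) => e p.1 q.1 * e p.2 q.2)
    (μ := μ) (ν := (volume : Measure (ℝ × ℝ))) (integrable_Phi h1 h2 hP hQ)
  rw [← hswap]
  refine integral_congr_ae (ae_of_all _ fun p => ?_)
  show p.1 * p.2 = ∫ q : ℝ × ℝ, e p.1 q.1 * e p.2 q.2
  rw [Measure.volume_eq_prod, integral_prod_mul (e p.1) (e p.2), integral_e, integral_e]

lemma integrable_H (h1 : μ.map Prod.fst = P) (h2 : μ.map Prod.snd = Q)
    (hP : Integrable (fun x : ℝ => x ^ 2) P) (hQ : Integrable (fun y : ℝ => y ^ 2) Q) :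
    Integrable (fun q : ℝ × ℝ => ∫ p : ℝ × ℝ, e p.1 q.1 * e p.2 q.2 ∂μ) volume :=
  (integrable_Phi h1 h2 hP hQ).integral_prod_right

lemma toReal_fst_margin (h1 : μ.map Prod.fst = P) (s : ℝ) :
    (μ (Ioi s ×ˢ (univ : Set ℝ))).toReal = 1 - cdf P s := by
  have hμP : μ (Ioi s ×ˢ (univ : Set ℝ)) = P (Ioi s) := by
    rw [← h1, Measure.map_apply measurable_fst measurableSet_Ioi, fst_preimage]
  have hsum : P (Iic s) + P (Ioi s) = 1 := by
    have h := measure_add_measure_compl (μ := P) (s := Iic s) measurableSet_Iic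
    rwa [compl_Iic, measure_univ] at h
  have htr : (P (Iic s)).toReal + (P (Ioi s)).toReal = 1 := by
    rw [← ENNReal.toReal_add (measure_ne_top _ _) (measure_ne_top _ _), hsum]
    simp
  rw [hμP, cdf_eq_real, measureReal_def]
  linarith

lemma survival_lower (h1 : μ.map Prod.fst = P) (h2 : μ.map Prod.snd = Q) (s t : ℝ) :
    1 - cdf P s - cdf Q t ≤ (μ (Ioi s ×ˢ Ioi t)).toReal := by
  have cover : (Ioi s ×ˢ (univ : Set ℝ)) ⊆ (Ioi s ×ˢ Ioi t) ∪ ((univ : Set ℝ) ×ˢ Iic t) := by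
    intro p hp
    rcases le_or_gt p.2 t with h | h
    · exact Or.inr ⟨mem_univ _, h⟩
    · exact Or.inl ⟨hp.1, h⟩
  have hm : μ (Ioi s ×ˢ (univ : Set ℝ)) ≤ μ (Ioi s ×ˢ Ioi t) + μ ((univ : Set ℝ) ×ˢ Iic t) :=
    (measure_mono cover).trans (measure_union_le _ _)
  have hr : (μ (Ioi s ×ˢ (univ : Set ℝ))).toReal
      ≤ (μ (Ioi s ×ˢ Ioi t)).toReal + (μ ((univ : Set ℝ) ×ˢ Iic t)).toReal := by
    rw [← ENNReal.toReal_add (measure_ne_top _ _) (measure_ne_top _ _)]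
    exact ENNReal.toReal_mono (by finiteness) hm
  have hQt : (μ ((univ : Set ℝ) ×ˢ Iic t)).toReal = cdf Q t := by
    have : Prod.snd ⁻¹' (Iic t) = ((univ : Set ℝ) ×ˢ Iic t) := by
      ext p; simp [Set.mem_prod]
    rw [← this, ← Measure.map_apply measurable_snd measurableSet_Iic, h2, cdf_eq_real, measureReal_def]
  rw [toReal_fst_margin h1, hQt] at hr
  linarith

end CouplingSec

end Stmt16Aux
end

end Stmt16AuxSec


open MeasureTheory

/-- `μ` is a coupling of `P` and `Q`. -/
def IsCoupling (P Q : Measure ℝ) (μ : Measure (ℝ × ℝ)) : Prop :=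
  IsProbabilityMeasure μ ∧ μ.map Prod.fst = P ∧ μ.map Prod.snd = Q

theorem stmt_16 (P Q : Measure ℝ) [IsProbabilityMeasure P] [IsProbabilityMeasure Q]
    (hP : Integrable (fun x : ℝ => x ^ 2) P)
    (hQ : Integrable (fun y : ℝ => y ^ 2) Q)
    (F G : ℝ → ℝ)
    (hF : ∀ x : ℝ, F x = (P (Set.Iic x)).toReal)
    (hG : ∀ y : ℝ, G y = (Q (Set.Iic y)).toReal)
    (Finv Ginv : ℝ → ℝ)
    (hFinv : ∀ ξ : ℝ, Finv ξ = sInf {x : ℝ | ξ ≤ F x})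
    (hGinv : ∀ ξ : ℝ, Ginv ξ = sInf {y : ℝ | ξ ≤ G y})
    (μMinus : Measure (ℝ × ℝ))
    (hμMinus : μMinus =
      (volume.restrict (Set.Ioo (0 : ℝ) 1)).map (fun u => (Finv u, Ginv (1 - u)))) :
    IsCoupling P Q μMinus ∧
    (∫ p, p.1 * p.2 ∂μMinus) =
      sInf {r : ℝ | ∃ μ : Measure (ℝ × ℝ), IsCoupling P Q μ ∧
        r = ∫ p, p.1 * p.2 ∂μ} := by
  open Set Filter ProbabilityTheory Stmt16Aux in
  -- identify F, G with cdfs and Finv, Ginv with quantile functions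
  have hFinv' : ∀ ξ : ℝ, Finv ξ = qf P ξ := by
    intro ξ
    rw [hFinv ξ]
    unfold qf
    congr 1
    ext x
    simp only [mem_setOf_eq, hF x, cdf_eq_real, measureReal_def]
  have hGinv' : ∀ ξ : ℝ, Ginv ξ = qf Q ξ := by
    intro ξ
    rw [hGinv ξ]
    unfold qf
    congr 1
    ext y
    simp only [mem_setOf_eq, hG y, cdf_eq_real, measureReal_def]
  set T : ℝ → ℝ × ℝ := fun u => (qf P u, qf Q (1 - u)) with hT
  have hμM : μMinus = (volume.restrict (Ioo (0:ℝ) 1)).map T := by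
    rw [hμMinus]
    congr 1
    funext u
    rw [hFinv' u, hGinv' (1 - u)]
  haveI hρ : IsProbabilityMeasure (volume.restrict (Ioo (0:ℝ) 1)) := by
    constructor
    rw [Measure.restrict_apply_univ]
    simp [Real.volume_Ioo]
  have hTae : AEMeasurable T (volume.restrict (Ioo (0:ℝ) 1)) :=
    (aemeasurable_qf P).prodMk (aemeasurable_qf_anti Q)
  haveI hμMprob : IsProbabilityMeasure μMinus := by
    rw [hμM]; exact Measure.isProbabilityMeasure_map hTae
  have hfstT : Prod.fst ∘ T = qf P := rfl
  have hsndT : Prod.snd ∘ T = fun u => qf Q (1 - u) := rfl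
  have hm1 : μMinus.map Prod.fst = P := by
    rw [hμM, AEMeasurable.map_map_of_aemeasurable measurable_fst.aemeasurable hTae, hfstT,
      map_qf P]
  have hm2 : μMinus.map Prod.snd = Q := by
    rw [hμM, AEMeasurable.map_map_of_aemeasurable measurable_snd.aemeasurable hTae, hsndT,
      map_qf_anti Q]
  have hcoupling : IsCoupling P Q μMinus := ⟨hμMprob, hm1, hm2⟩
  -- survival function of μMinus
  have hsurv : ∀ s t : ℝ, μMinus (Ioi s ×ˢ Ioi t) = ENNReal.ofReal (1 - cdf P s - cdf Q t) := by
    intro s t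
    rw [hμM, Measure.map_apply_of_aemeasurable hTae (measurableSet_Ioi.prod measurableSet_Ioi),
      Measure.restrict_apply' measurableSet_Ioo]
    have hset : T ⁻¹' (Ioi s ×ˢ Ioi t) ∩ Ioo (0:ℝ) 1 = Ioo (cdf P s) (1 - cdf Q t) := by
      ext u
      simp only [mem_inter_iff, mem_preimage, Set.mem_prod, mem_Ioi, mem_Ioo, hT]
      constructor
      · rintro ⟨⟨h1, h2⟩, hu0, hu1⟩
        have hu : u ∈ Ioo (0:ℝ) 1 := ⟨hu0, hu1⟩
        have hu' : (1 - u) ∈ Ioo (0:ℝ) 1 := ⟨by linarith, by linarith⟩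
        have e1 := (lt_qf_iff P hu).1 h1
        have e2 := (lt_qf_iff Q hu').1 h2
        exact ⟨e1, by linarith⟩
      · rintro ⟨h1, h2⟩
        have hu0 : (0:ℝ) < u := lt_of_le_of_lt (cdf_nonneg P s) h1
        have hu1 : u < 1 := by have := cdf_nonneg Q t; linarith
        have hu : u ∈ Ioo (0:ℝ) 1 := ⟨hu0, hu1⟩
        have hu' : (1 - u) ∈ Ioo (0:ℝ) 1 := ⟨by linarith, by linarith⟩
        exact ⟨⟨(lt_qf_iff P hu).2 h1, (lt_qf_iff Q hu').2 (by linarith)⟩, hu0, hu1⟩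
    rw [hset, Real.volume_Ioo]
    congr 1
    ring
  -- the key inequality
  have hineq : ∀ μ : Measure (ℝ × ℝ), IsCoupling P Q μ →
      (∫ p : ℝ × ℝ, p.1 * p.2 ∂μMinus) ≤ ∫ p : ℝ × ℝ, p.1 * p.2 ∂μ := by
    rintro μ ⟨hμprob, hc1, hc2⟩
    haveI := hμprob
    rw [key_repr hm1 hm2 hP hQ, key_repr hc1 hc2 hP hQ]
    refine integral_mono (integrable_H hm1 hm2 hP hQ) (integrable_H hc1 hc2 hP hQ) ?_
    intro q
    have hsl := survival_lower hc1 hc2 q.1 q.2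
    have hμMle : (μMinus (Ioi q.1 ×ˢ Ioi q.2)).toReal ≤ (μ (Ioi q.1 ×ˢ Ioi q.2)).toReal := by
      rw [hsurv q.1 q.2]
      rcases le_or_gt (1 - cdf P q.1 - cdf Q q.2) 0 with h | h
      · rw [ENNReal.ofReal_of_nonpos h]
        simp
      · rw [ENNReal.toReal_ofReal h.le]
        exact hsl
    simp only [inner_integral_eq hm1 hm2 q.1 q.2, inner_integral_eq hc1 hc2 q.1 q.2]
    linarith
  refine ⟨hcoupling, ?_⟩
  refine (IsLeast.csInf_eq ?_).symm
  constructor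
  · exact ⟨μMinus, hcoupling, rfl⟩
  · rintro r ⟨μ, hμc, rfl⟩
    exact hineq μ hμc
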